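/- Define the relation ⊴_l on OF_n by a ⊴_l b iff a = be for some e ∈ E = {f_{Z,Z} : Z ⊆ [n-1]}. Then ⊴_l is contained in the partial order ⪯ defined by f_{Z,W} ⪯ f_{X,Y} iff W ⊊ Y, or (W = Y and Z ≤ X componentwise). In particular, f_{X,Y}·f_{Z,Z} is of the form f_{Z',Y'} with Y' ⊆ Y, and if Y' = Y then Z' ≤ X componentwise. -/

import Mathlib

/-- The order-preserving map `f_{X,Y} : [n+1] → [n+1]` (with top element
`Fin.last n` playing the role of `n+1`, and `X, Y ⊆ [n]` via `Fin.castSucc`)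
determined by equal-size subsets `X, Y`: it sends the interval
`(x_{i-1}, x_i]` to `y_i` and everything above `x_l` to the top. -/
def fXY (n : ℕ) (X Y : Finset (Fin n)) (_h : X.card = Y.card) :
    Fin (n + 1) → Fin (n + 1) := fun x =>
  if hk : (X.filter fun t => t.castSucc < x).card < Y.card then
    (Y.orderEmbOfFin rfl ⟨_, hk⟩).castSucc
  else Fin.last n

theorem fXY_monotone (n : ℕ) (X Y : Finset (Fin n)) (h : X.card = Y.card) :
    Monotone (fXY n X Y h) := by
  intro a b hab
  unfold fXY
  have hle : (X.filter fun t => t.castSucc < a).card ≤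
      (X.filter fun t => t.castSucc < b).card :=
    Finset.card_le_card (fun t ht => by
      simp only [Finset.mem_filter] at ht ⊢
      exact ⟨ht.1, lt_of_lt_of_le ht.2 hab⟩)
  by_cases ha : (X.filter fun t => t.castSucc < a).card < Y.card
  · by_cases hb : (X.filter fun t => t.castSucc < b).card < Y.card
    · rw [dif_pos ha, dif_pos hb]
      exact Fin.castSucc_le_castSucc_iff.mpr
        ((Y.orderEmbOfFin rfl).monotone (by exact hle))
    · rw [dif_pos ha, dif_neg hb]; exact Fin.le_last _
  · have hb : ¬(X.filter fun t => t.castSucc < b).card < Y.card := by omega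
    rw [dif_neg ha, dif_neg hb]

theorem fXY_last (n : ℕ) (X Y : Finset (Fin n)) (h : X.card = Y.card) :
    fXY n X Y h (Fin.last n) = Fin.last n := by
  unfold fXY
  rw [Finset.filter_true_of_mem (fun t _ => Fin.castSucc_lt_last t), h,
    dif_neg (lt_irrefl _)]

/-- The monoid `OF_{n+1}` of order-preserving self-maps of `[n+1]` fixing the
top element, as a submonoid of `Function.End (Fin (n+1))`. -/
def OFmon (n : ℕ) : Submonoid (Function.End (Fin (n + 1))) where
  carrier := {f | Monotone f ∧ f (Fin.last n) = Fin.last n}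
  mul_mem' := by
    rintro f g ⟨hf1, hf2⟩ ⟨hg1, hg2⟩
    refine ⟨hf1.comp hg1, ?_⟩
    show f (g (Fin.last n)) = Fin.last n
    rw [hg2, hf2]
  one_mem' := ⟨monotone_id, rfl⟩

/-- `f_{X,Y}` as an element of the monoid `OF_{n+1}`. -/
def FXY (n : ℕ) (X Y : Finset (Fin n)) (h : X.card = Y.card) : OFmon n :=
  ⟨fXY n X Y h, fXY_monotone n X Y h, fXY_last n X Y h⟩

/-- Green's `R`-equivalence on a monoid. -/
def RRel {M : Type*} [Monoid M] (a b : M) : Prop :=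
  (∃ u, a * u = b) ∧ ∃ u, b * u = a

/-- Green's `L`-equivalence on a monoid. -/
def LRel {M : Type*} [Monoid M] (a b : M) : Prop :=
  (∃ u, u * a = b) ∧ ∃ u, u * b = a

/-- Green's `J`-equivalence on a monoid. -/
def JRel {M : Type*} [Monoid M] (a b : M) : Prop :=
  (∃ u v, u * a * v = b) ∧ ∃ u v, u * b * v = a

lemma rank_lemma {n : ℕ} (S : Finset (Fin n)) (k : Fin S.card) :
    (S.filter (fun t => t < S.orderEmbOfFin rfl k)).card = k := by
  set e := S.orderEmbOfFin rfl with he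
  have himg : S.filter (fun t => t < e k)
      = (Finset.univ.filter (fun i : Fin S.card => i < k)).image e := by
    ext t
    simp only [Finset.mem_filter, Finset.mem_image, Finset.mem_univ, true_and]
    constructor
    · rintro ⟨htS, htlt⟩
      have : t ∈ Set.range e := by rw [he, Finset.range_orderEmbOfFin]; exact htS
      obtain ⟨i, rfl⟩ := this
      exact ⟨i, e.lt_iff_lt.mp htlt, rfl⟩
    · rintro ⟨i, hik, rfl⟩
      exact ⟨Finset.orderEmbOfFin_mem S rfl i, e.lt_iff_lt.mpr hik⟩
  rw [himg, Finset.card_image_of_injective _ e.injective]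
  rw [show (Finset.univ.filter (fun i : Fin S.card => i < k)) = Finset.Iio k by ext i; simp]
  exact Fin.card_Iio k

lemma rank_inverse {n : ℕ} (S : Finset (Fin n)) {y : Fin n} (hy : y ∈ S) {c : ℕ}
    (hc : c < S.card) (hcount : (S.filter (fun t => t < y)).card = c) :
    S.orderEmbOfFin rfl ⟨c, hc⟩ = y := by
  have : y ∈ Set.range (S.orderEmbOfFin rfl) := by
    rw [Finset.range_orderEmbOfFin]; exact hy
  obtain ⟨j, rfl⟩ := this
  have := rank_lemma S j
  rw [this] at hcount
  congr 1
  exact Fin.ext hcount.symm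

lemma filter_le_card {n : ℕ} (S : Finset (Fin n)) (k : Fin S.card) :
    (S.filter (fun t => t ≤ S.orderEmbOfFin rfl k)).card = k + 1 := by
  have hins : S.filter (fun t => t ≤ S.orderEmbOfFin rfl k)
      = insert (S.orderEmbOfFin rfl k) (S.filter (fun t => t < S.orderEmbOfFin rfl k)) := by
    ext t
    simp only [Finset.mem_filter, Finset.mem_insert, le_iff_lt_or_eq]
    constructor
    · rintro ⟨htS, h | h⟩
      · exact Or.inr ⟨htS, h⟩
      · exact Or.inl h
    · rintro (rfl | ⟨htS, h⟩)
      · exact ⟨Finset.orderEmbOfFin_mem S rfl k, Or.inr rfl⟩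
      · exact ⟨htS, Or.inl h⟩
  rw [hins, Finset.card_insert_of_notMem (by simp), rank_lemma]

/-- The set of "jump points" of `F`. -/
def jumps {n : ℕ} (F : Fin (n + 1) → Fin (n + 1)) : Finset (Fin n) :=
  Finset.univ.filter (fun z => F z.castSucc ≠ F z.succ)

/-- The set of non-top "values" of `F`. -/
def vals {n : ℕ} (F : Fin (n + 1) → Fin (n + 1)) : Finset (Fin n) :=
  Finset.univ.filter (fun y => y.castSucc ∈ Set.range F)

lemma key_count {n : ℕ} {F : Fin (n + 1) → Fin (n + 1)} (hF : Monotone F)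
    (hlast : F (Fin.last n) = Fin.last n) (x : Fin (n + 1)) :
    ((jumps F).filter (fun t => t.castSucc < x)).card
      = ((vals F).filter (fun t => t.castSucc < F x)).card := by
  apply Finset.card_bij (i := fun z hz =>
    (F z.castSucc).castPred (by
      simp only [jumps, Finset.mem_filter, Finset.mem_univ, true_and] at hz
      have h1 : F z.castSucc < F z.succ := lt_of_le_of_ne (hF (Fin.castSucc_le_succ z)) hz.1
      exact Fin.ne_last_of_lt h1))
  · intro z hz
    simp only [jumps, Finset.mem_filter, Finset.mem_univ, true_and] at hz
    have h1 : F z.castSucc < F z.succ := lt_of_le_of_ne (hF (Fin.castSucc_le_succ z)) hz.1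
    have h2 : z.succ ≤ x := Fin.castSucc_lt_iff_succ_le.mp hz.2
    simp only [vals, Finset.mem_filter, Finset.mem_univ, true_and, Fin.castSucc_castPred]
    exact ⟨⟨z.castSucc, rfl⟩, lt_of_lt_of_le h1 (hF h2)⟩
  · intro z1 hz1 z2 hz2 heq
    simp only [jumps, Finset.mem_filter, Finset.mem_univ, true_and] at hz1 hz2
    have heq' : F z1.castSucc = F z2.castSucc := by
      have := congrArg Fin.castSucc heq
      rwa [Fin.castSucc_castPred, Fin.castSucc_castPred] at this
    by_contra hne
    rcases lt_or_gt_of_ne hne with h | h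
    · have : F z1.succ ≤ F z2.castSucc := hF (Fin.succ_le_castSucc_iff.mpr h)
      have h1 : F z1.castSucc < F z1.succ :=
        lt_of_le_of_ne (hF (Fin.castSucc_le_succ z1)) hz1.1
      exact absurd heq' (ne_of_lt (lt_of_lt_of_le h1 this))
    · have : F z2.succ ≤ F z1.castSucc := hF (Fin.succ_le_castSucc_iff.mpr h)
      have h2 : F z2.castSucc < F z2.succ :=
        lt_of_le_of_ne (hF (Fin.castSucc_le_succ z2)) hz2.1
      exact absurd heq'.symm (ne_of_lt (lt_of_lt_of_le h2 this))
  · intro y hy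
    simp only [vals, Finset.mem_filter, Finset.mem_univ, true_and] at hy
    obtain ⟨⟨w, hw⟩, hylt⟩ := hy
    set T := Finset.univ.filter (fun v : Fin (n+1) => F v = y.castSucc) with hT
    have hTne : T.Nonempty := ⟨w, by simp [hT, hw]⟩
    set w' := T.max' hTne with hw'
    have hw'mem : F w' = y.castSucc := by
      have := T.max'_mem hTne
      simpa [hT] using this
    have hw'ne : w' ≠ Fin.last n := by
      intro hcontra
      rw [hcontra, hlast] at hw'mem
      exact absurd hw'mem.symm (Fin.ne_last_of_lt (Fin.castSucc_lt_last y))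
    set z := w'.castPred hw'ne with hz
    have hzc : z.castSucc = w' := Fin.castSucc_castPred w' hw'ne
    have hzlt : z.castSucc < x := by
      rw [hzc]
      by_contra hc
      push_neg at hc
      exact absurd (le_trans (hF hc) (le_of_eq hw'mem)) (not_le_of_gt hylt)
    have hzjump : F z.castSucc ≠ F z.succ := by
      rw [hzc]
      intro hcontra
      have hmem : z.succ ∈ T := by simp [hT, ← hcontra, hzc, hw'mem]
      have := T.le_max' _ hmem
      rw [← hw'] at this
      exact absurd (lt_of_lt_of_le (hzc ▸ (Fin.castSucc_lt_succ : z.castSucc < z.succ)) this) (lt_irrefl w')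
    refine ⟨z, ?_, ?_⟩
    · simp [jumps, hzlt, hzjump]
    · have : F z.castSucc = y.castSucc := by rw [hzc]; exact hw'mem
      apply Fin.castSucc_injective
      rw [Fin.castSucc_castPred, this]

lemma card_jumps {n : ℕ} {F : Fin (n + 1) → Fin (n + 1)} (hF : Monotone F)
    (hlast : F (Fin.last n) = Fin.last n) : (jumps F).card = (vals F).card := by
  have := key_count hF hlast (Fin.last n)
  rwa [hlast, Finset.filter_true_of_mem (fun t _ => Fin.castSucc_lt_last t),
    Finset.filter_true_of_mem (fun t _ => Fin.castSucc_lt_last t)] at this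

lemma eq_fXY {n : ℕ} {F : Fin (n + 1) → Fin (n + 1)} (hF : Monotone F)
    (hlast : F (Fin.last n) = Fin.last n) :
    F = fXY n (jumps F) (vals F) (card_jumps hF hlast) := by
  funext x
  have hcnt := key_count hF hlast x
  show F x = fXY n (jumps F) (vals F) (card_jumps hF hlast) x
  unfold fXY
  by_cases hx : F x = Fin.last n
  · have hcfull : ((vals F).filter (fun t => t.castSucc < F x)).card = (vals F).card := by
      rw [hx, Finset.filter_true_of_mem (fun t _ => Fin.castSucc_lt_last t)]
    rw [dif_neg (by rw [hcnt, hcfull]; exact lt_irrefl _), hx]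
  · set y0 := (F x).castPred hx with hy0
    have hy0c : y0.castSucc = F x := Fin.castSucc_castPred (F x) hx
    have hy0mem : y0 ∈ vals F := by
      simp only [vals, Finset.mem_filter, Finset.mem_univ, true_and]
      exact ⟨x, hy0c.symm⟩
    have hfilt : (vals F).filter (fun t => t.castSucc < F x)
        = (vals F).filter (fun t => t < y0) := by
      apply Finset.filter_congr
      intro t _
      rw [← hy0c, Fin.castSucc_lt_castSucc_iff]
    have hclt : ((jumps F).filter (fun t => t.castSucc < x)).card < (vals F).card := by
      rw [hcnt, hfilt]
      apply Finset.card_lt_card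
      constructor
      · exact Finset.filter_subset _ _
      · intro hsub
        have := hsub hy0mem
        simp at this
    rw [dif_pos hclt]
    rw [← hy0c]
    congr 1
    symm
    apply rank_inverse (vals F) hy0mem hclt
    rw [← hfilt, ← hcnt]


lemma orderEmb_le_orderEmb {n : ℕ} {S T : Finset (Fin n)} (hST : S = T) {k l : ℕ}
    (hk : S.card = k) (hl : T.card = l) (i : Fin k) (j : Fin l) :
    S.orderEmbOfFin hk i ≤ T.orderEmbOfFin hl j ↔ (i : ℕ) ≤ (j : ℕ) := by
  subst hST; subst hk; subst hl
  rw [OrderEmbedding.le_iff_le, Fin.le_def]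

lemma le_fXY_self {n : ℕ} (Z : Finset (Fin n)) (x : Fin (n + 1)) :
    x ≤ fXY n Z Z rfl x := by
  unfold fXY
  by_cases hk : (Z.filter fun t => t.castSucc < x).card < Z.card
  · rw [dif_pos hk]
    by_contra hlt
    push_neg at hlt
    have hsub : Z.filter (fun t => t ≤ Z.orderEmbOfFin rfl
          ⟨(Z.filter fun t => t.castSucc < x).card, hk⟩)
        ⊆ Z.filter (fun t => t.castSucc < x) := by
      intro t ht
      simp only [Finset.mem_filter] at ht ⊢
      exact ⟨ht.1, lt_of_le_of_lt (Fin.castSucc_le_castSucc_iff.mpr ht.2) hlt⟩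
    have h1 := filter_le_card Z ⟨(Z.filter fun t => t.castSucc < x).card, hk⟩
    have h2 := Finset.card_le_card hsub
    rw [h1] at h2
    have h3 : ((⟨(Z.filter fun t => t.castSucc < x).card, hk⟩ : Fin Z.card) : ℕ)
        = (Z.filter fun t => t.castSucc < x).card := rfl
    rw [h3] at h2
    omega
  · rw [dif_neg hk]; exact Fin.le_last x

lemma fXY_eq_of_lt {n : ℕ} (X Y : Finset (Fin n)) (h : X.card = Y.card)
    (x : Fin (n + 1)) (hk : (X.filter fun t => t.castSucc < x).card < Y.card) :
    fXY n X Y h x = (Y.orderEmbOfFin rfl ⟨_, hk⟩).castSucc := dif_pos hk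

lemma fXY_eq_of_ge {n : ℕ} (X Y : Finset (Fin n)) (h : X.card = Y.card)
    (x : Fin (n + 1)) (hk : ¬ (X.filter fun t => t.castSucc < x).card < Y.card) :
    fXY n X Y h x = Fin.last n := dif_neg hk

lemma fXY_val_cases {n : ℕ} (X Y : Finset (Fin n)) (h : X.card = Y.card)
    (x : Fin (n + 1)) :
    fXY n X Y h x = Fin.last n ∨ ∃ y ∈ Y, fXY n X Y h x = y.castSucc := by
  unfold fXY
  split
  · exact Or.inr ⟨_, Finset.orderEmbOfFin_mem Y rfl _, rfl⟩
  · exact Or.inl rfl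

/-- The relation `⊴_l` (`a ⊴_l b` iff `a = b·f_{Z,Z}` for some `Z`) is contained
in the partial order `⪯` given by `f_{Z',Y'} ⪯ f_{X,Y}` iff `Y' ⊊ Y` or
(`Y' = Y` and `Z' ≤ X` componentwise): concretely, `f_{X,Y} ∘ f_{Z,Z}` equals
some `f_{Z',Y'}` with `Y' ⊆ Y`, and if `Y' = Y` then `Z' ≤ X` componentwise. -/
theorem statement18 (n : ℕ) :
    ∀ (X Y : Finset (Fin n)) (h : X.card = Y.card) (Z : Finset (Fin n)),
      ∃ (Z' Y' : Finset (Fin n)) (h' : Z'.card = Y'.card),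
        fXY n X Y h ∘ fXY n Z Z rfl = fXY n Z' Y' h' ∧
        (Y' ⊂ Y ∨ ∃ hc : Z'.card = X.card, Y' = Y ∧
          ∀ i : Fin Z'.card, Z'.orderEmbOfFin rfl i ≤ X.orderEmbOfFin hc.symm i) := by
  intro X Y h Z
  have hmono : Monotone (fXY n X Y h ∘ fXY n Z Z rfl) :=
    (fXY_monotone n X Y h).comp (fXY_monotone n Z Z rfl)
  have hlast : (fXY n X Y h ∘ fXY n Z Z rfl) (Fin.last n) = Fin.last n := by
    simp only [Function.comp_apply, fXY_last]
  refine ⟨jumps _, vals _, card_jumps hmono hlast, eq_fXY hmono hlast, ?_⟩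
  have hsubY : vals (fXY n X Y h ∘ fXY n Z Z rfl) ⊆ Y := by
    intro y hy
    simp only [vals, Finset.mem_filter, Finset.mem_univ, true_and] at hy
    obtain ⟨x, hx⟩ := hy
    rcases fXY_val_cases X Y h (fXY n Z Z rfl x) with hl | ⟨y', hy', heq⟩
    · rw [Function.comp_apply, hl] at hx
      exact absurd hx (Fin.ne_last_of_lt (Fin.castSucc_lt_last y)).symm
    · rw [Function.comp_apply, heq] at hx
      exact (Fin.castSucc_injective n hx) ▸ hy'
  rcases eq_or_lt_of_le (Finset.le_iff_subset.mpr hsubY) with hYeq | hYlt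
  swap
  · exact Or.inl hYlt
  · have hc : (jumps (fXY n X Y h ∘ fXY n Z Z rfl)).card = X.card := by
      rw [card_jumps hmono hlast, hYeq, h]
    refine Or.inr ⟨hc, hYeq, ?_⟩
    intro i
    have hiX : (i : ℕ) < X.card := hc ▸ i.2
    have hxi : X.orderEmbOfFin hc.symm i = X.orderEmbOfFin rfl ⟨(i : ℕ), hiX⟩ :=
      Finset.orderEmbOfFin_eq_orderEmbOfFin_iff.mpr rfl
    have hcount1 : (X.filter fun t =>
        t.castSucc < (X.orderEmbOfFin hc.symm i).succ).card = (i : ℕ) + 1 := by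
      rw [show (X.filter fun t => t.castSucc < (X.orderEmbOfFin hc.symm i).succ)
          = X.filter (fun t => t ≤ X.orderEmbOfFin rfl ⟨(i : ℕ), hiX⟩) from
        Finset.filter_congr (fun t _ => by rw [hxi]; simp)]
      rw [filter_le_card]
    have hlow : fXY n X Y h (X.orderEmbOfFin hc.symm i).succ
        ≤ (fXY n X Y h ∘ fXY n Z Z rfl) (X.orderEmbOfFin hc.symm i).succ :=
      fXY_monotone n X Y h (le_fXY_self Z _)
    have hFeval : (fXY n X Y h ∘ fXY n Z Z rfl) (X.orderEmbOfFin hc.symm i).succ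
        = fXY n (jumps (fXY n X Y h ∘ fXY n Z Z rfl))
            (vals (fXY n X Y h ∘ fXY n Z Z rfl)) (card_jumps hmono hlast)
            (X.orderEmbOfFin hc.symm i).succ := congrFun (eq_fXY hmono hlast) _
    have key2 : (i : ℕ) + 1 ≤ ((jumps (fXY n X Y h ∘ fXY n Z Z rfl)).filter
        (fun t => t.castSucc < (X.orderEmbOfFin hc.symm i).succ)).card := by
      by_cases hcY : ((jumps (fXY n X Y h ∘ fXY n Z Z rfl)).filter
          (fun t => t.castSucc < (X.orderEmbOfFin hc.symm i).succ)).card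
          < (vals (fXY n X Y h ∘ fXY n Z Z rfl)).card
      · have hFv : (fXY n X Y h ∘ fXY n Z Z rfl) (X.orderEmbOfFin hc.symm i).succ
            = ((vals (fXY n X Y h ∘ fXY n Z Z rfl)).orderEmbOfFin rfl
              ⟨_, hcY⟩).castSucc :=
          hFeval.trans (fXY_eq_of_lt _ _ _ _ hcY)
        by_cases hiY : (i : ℕ) + 1 < Y.card
        · have hk1 : (X.filter fun t =>
              t.castSucc < (X.orderEmbOfFin hc.symm i).succ).card < Y.card := by
            rw [hcount1]; exact hiY
          have hXv : fXY n X Y h (X.orderEmbOfFin hc.symm i).succ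
              = (Y.orderEmbOfFin rfl ⟨(i : ℕ) + 1, hiY⟩).castSucc := by
            rw [fXY_eq_of_lt _ _ _ _ hk1]
            exact congrArg Fin.castSucc
              (Finset.orderEmbOfFin_eq_orderEmbOfFin_iff.mpr hcount1)
          rw [hXv, hFv, Fin.castSucc_le_castSucc_iff] at hlow
          exact (orderEmb_le_orderEmb hYeq.symm rfl rfl _ _).mp hlow
        · have hk1 : ¬ (X.filter fun t =>
              t.castSucc < (X.orderEmbOfFin hc.symm i).succ).card < Y.card := by
            rw [hcount1]; exact hiY
          have hXv : fXY n X Y h (X.orderEmbOfFin hc.symm i).succ = Fin.last n :=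
            fXY_eq_of_ge _ _ _ _ hk1
          rw [hXv, hFv] at hlow
          exact absurd (lt_of_le_of_lt hlow (Fin.castSucc_lt_last _)) (lt_irrefl _)
      · push_neg at hcY
        have h1 : (i : ℕ) < (vals (fXY n X Y h ∘ fXY n Z Z rfl)).card :=
          (card_jumps hmono hlast) ▸ i.2
        omega
    by_contra hfin
    push_neg at hfin
    have hsub : (jumps (fXY n X Y h ∘ fXY n Z Z rfl)).filter
        (fun t => t.castSucc < (X.orderEmbOfFin hc.symm i).succ)
        ⊆ (jumps (fXY n X Y h ∘ fXY n Z Z rfl)).filter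
          (fun t => t < (jumps (fXY n X Y h ∘ fXY n Z Z rfl)).orderEmbOfFin rfl i) := by
      intro t ht
      simp only [Finset.mem_filter, Fin.castSucc_lt_succ_iff] at ht ⊢
      exact ⟨ht.1, lt_of_le_of_lt ht.2 hfin⟩
    have h2 := Finset.card_le_card hsub
    rw [rank_lemma] at h2
    omega
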